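/- arXiv:1003.0629 — 7 statements merged into one kernel-verified Lean document; each statement's English description precedes it below -/
import Mathlib

section
/- Let V be a vector space over a field of characteristic zero of dimension p with basis e_0, ..., e_{p-1}, and let q be a positive integer coprime to p. Then the p vectors s_l = e_{lq mod p} + e_{(lq+1) mod p} + ... + e_{(lq+q-1) mod p}, for l = 0, 1, ..., p-1 (all indices taken modulo p), span the whole space V. -/
/-- If `V` is a vector space over a field of characteristic zero with basis
`e : ZMod p → V` and `q` is a positive integer coprime to `p`, then the `p` vectors
`s_l = e (l*q) + e (l*q+1) + ⋯ + e (l*q+q-1)` (indices mod `p`) span `V`. -/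
theorem stmt_0 {K V : Type*} [Field K] [CharZero K] [AddCommGroup V] [Module K V]
    (p q : ℕ) (hp : 0 < p) (hq : 0 < q) (hpq : Nat.Coprime p q)
    (e : Module.Basis (ZMod p) K V) :
    Submodule.span K
      (Set.range (fun l : Fin p =>
        ∑ i ∈ Finset.range q, e ((((l : ℕ) * q + i : ℕ) : ZMod p)))) = ⊤ := by
  haveI : NeZero p := ⟨hp.ne'⟩
  set S : Submodule K V := Submodule.span K
      (Set.range (fun l : Fin p =>
        ∑ i ∈ Finset.range q, e ((((l : ℕ) * q + i : ℕ) : ZMod p)))) with hS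
  set T : V := ∑ r : ZMod p, e r with hT
  set P : ℕ → V := fun m => ∑ j ∈ Finset.range m, e ((j : ℕ) : ZMod p) with hPdef
  have hbij : Function.Bijective (fun l : Fin p => ((l : ℕ) : ZMod p)) := by
    rw [Fintype.bijective_iff_injective_and_card]
    refine ⟨fun a b hab => ?_, by simp [ZMod.card]⟩
    have := congrArg ZMod.val hab
    simpa [ZMod.val_natCast_of_lt a.isLt, ZMod.val_natCast_of_lt b.isLt,
      Fin.val_injective.eq_iff] using this
  have key : ∀ g : ℕ → ZMod p, Function.Bijective (fun l : Fin p => g l) →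
      (∑ l : Fin p, e (g l)) = T := by
    intro g hg
    exact Fintype.sum_bijective _ hg (fun l => e (g l)) e (fun x => rfl)
  set u : (ZMod p)ˣ := ZMod.unitOfCoprime q hpq.symm with hu
  have huq : (u : ZMod p) = (q : ZMod p) := ZMod.coe_unitOfCoprime q hpq.symm
  -- each generator is in S
  have hgen : ∀ l : ℕ, (∑ i ∈ Finset.range q, e (((l * q + i : ℕ) : ZMod p))) ∈ S := by
    intro l
    have h1 : (∑ i ∈ Finset.range q, e (((l * q + i : ℕ) : ZMod p)))
        = ∑ i ∈ Finset.range q, e ((((l % p : ℕ) * q + i : ℕ) : ZMod p)) := by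
      refine Finset.sum_congr rfl fun i _ => ?_
      congr 1
      push_cast [ZMod.natCast_mod]
      ring
    rw [h1, hS]
    exact Submodule.subset_span ⟨⟨l % p, Nat.mod_lt _ hp⟩, rfl⟩
  -- q • T ∈ S, hence T ∈ S
  have hsum : (∑ l : Fin p, ∑ i ∈ Finset.range q, e ((((l : ℕ) * q + i : ℕ) : ZMod p)))
      = q • T := by
    rw [Finset.sum_comm]
    have h3 : ∀ i ∈ Finset.range q,
        (∑ l : Fin p, e ((((l : ℕ) * q + i : ℕ) : ZMod p))) = T := by
      intro i _
      refine key (fun n => (((n * q + i : ℕ)) : ZMod p)) ?_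
      have hfe : (fun n : ℕ => (((n * q + i : ℕ)) : ZMod p)) ∘ (fun l : Fin p => (l : ℕ))
          = (fun r : ZMod p => r * (q : ZMod p) + (i : ℕ)) ∘ (fun l : Fin p => ((l : ℕ) : ZMod p)) := by
        funext l; simp only [Function.comp]; push_cast; ring
      show Function.Bijective ((fun n : ℕ => (((n * q + i : ℕ)) : ZMod p)) ∘ (fun l : Fin p => (l : ℕ)))
      rw [hfe]
      have hold : (fun l : Fin p => (((l : ℕ) * q + i : ℕ) : ZMod p))
          = (fun r : ZMod p => r * (q : ZMod p) + (i : ℕ)) ∘ (fun l : Fin p => ((l : ℕ) : ZMod p)) := by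
        funext l; simp only [Function.comp]; push_cast; ring
      have hperm : Function.Bijective (fun r : ZMod p => r * (q : ZMod p) + ((i : ℕ) : ZMod p)) := by
        have : (fun r : ZMod p => r * (q : ZMod p) + ((i : ℕ) : ZMod p))
            = (Equiv.addRight ((i : ℕ) : ZMod p)) ∘ (Units.mulRight u) := by
          funext r; simp [huq]
        rw [this]
        exact (Equiv.addRight _).bijective.comp (Units.mulRight u).bijective
      exact hperm.comp hbij
    rw [Finset.sum_congr rfl h3]
    simp
  have hTS : T ∈ S := by
    have h1 : (q : K) • T ∈ S := by
      have h2 : (q : K) • T = q • T := by rw [Nat.cast_smul_eq_nsmul]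
      rw [h2, ← hsum]
      exact Submodule.sum_mem _ fun l _ => Submodule.subset_span ⟨l, rfl⟩
    have hq0 : (q : K) ≠ 0 := Nat.cast_ne_zero.mpr hq.ne'
    have := Submodule.smul_mem S (q : K)⁻¹ h1
    rwa [inv_smul_smul₀ hq0] at this
  -- P (a + p) = P a + T
  have hPadd : ∀ a : ℕ, P (a + p) = P a + T := by
    intro a
    rw [hPdef]
    simp only [Finset.sum_range_add]
    congr 1
    rw [← Fin.sum_univ_eq_sum_range (fun j => e (((a + j : ℕ) : ZMod p))) p]
    refine key (fun n => (((a + n : ℕ)) : ZMod p)) ?_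
    have hfe : (fun n : ℕ => (((a + n : ℕ)) : ZMod p)) ∘ (fun l : Fin p => (l : ℕ))
        = (fun r : ZMod p => (a : ZMod p) + r) ∘ (fun l : Fin p => ((l : ℕ) : ZMod p)) := by
      funext l; simp only [Function.comp]; push_cast; ring
    show Function.Bijective ((fun n : ℕ => (((a + n : ℕ)) : ZMod p)) ∘ (fun l : Fin p => (l : ℕ)))
    rw [hfe]
    exact (Equiv.addLeft ((a : ℕ) : ZMod p)).bijective.comp hbij
  -- P m = P (m % p) + (m / p) • T
  have hPmod : ∀ m : ℕ, P m = P (m % p) + (m / p) • T := by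
    have haux : ∀ k r : ℕ, P (r + p * k) = P r + k • T := by
      intro k
      induction k with
      | zero => simp
      | succ n ih =>
        intro r
        have : r + p * (n + 1) = (r + p * n) + p := by ring
        rw [this, hPadd, ih, succ_nsmul]
        abel
    intro m
    conv_lhs => rw [← Nat.mod_add_div m p]
    exact haux _ _
  -- P (l * q) ∈ S for all l
  have hPq : ∀ l : ℕ, P (l * q) ∈ S := by
    intro l
    induction l with
    | zero => simp [hPdef]
    | succ n ih =>
      have h1 : (n + 1) * q = n * q + q := by ring
      have hsplit : P (n * q + q)
          = P (n * q) + ∑ i ∈ Finset.range q, e (((n * q + i : ℕ)) : ZMod p) := by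
        rw [hPdef]; exact Finset.sum_range_add _ _ _
      rw [h1, hsplit]
      exact Submodule.add_mem _ ih (hgen n)
  -- P m ∈ S for all m ≤ p
  have hPS : ∀ m : ℕ, m ≤ p → P m ∈ S := by
    intro m hm
    rcases eq_or_lt_of_le hm with h | h
    · rw [h]
      have : P p = T := by
        have := hPadd 0
        simpa [hPdef] using this
      rwa [this]
    · set l : ℕ := ((m : ZMod p) * (u⁻¹ : (ZMod p)ˣ)).val with hl
      have hlq : (l * q) % p = m := by
        have h1 : ((l * q : ℕ) : ZMod p) = (m : ZMod p) := by
          push_cast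
          rw [hl, ZMod.natCast_zmod_val, ← huq]
          rw [mul_assoc]
          simp
        have h2 := congrArg ZMod.val h1
        rwa [ZMod.val_natCast, ZMod.val_natCast_of_lt h] at h2
      have h3 := hPq l
      rw [hPmod (l * q), hlq] at h3
      have h4 := Submodule.sub_mem S h3 (nsmul_mem hTS (l * q / p))
      simpa using h4
  -- conclude
  rw [eq_top_iff, ← e.span_eq]
  refine Submodule.span_le.mpr ?_
  rintro _ ⟨r, rfl⟩
  have hr1 : P (r.val + 1) = P r.val + e r := by
    rw [hPdef]
    simp [Finset.sum_range_succ, ZMod.natCast_zmod_val]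
  have h5 := Submodule.sub_mem S (hPS (r.val + 1) (ZMod.val_lt r)) (hPS r.val (ZMod.val_lt r).le)
  rw [hr1] at h5
  simpa using h5
end

section
/- Let G be a group acting linearly on a finite-dimensional vector space S, and let y ∈ S be nonzero. Among all subspaces V of S that contain y and have finite G-orbit in the set of subspaces, there exists a unique one of minimal dimension, and it equals the intersection of all subspaces containing y with finite G-orbit. -/
/-- If `G` acts linearly on a finite-dimensional vector space `S` and `y ≠ 0`,
then among the subspaces containing `y` with finite `G`-orbit there is a unique one of
minimal dimension, and it equals the intersection of all of them. -/
theorem stmt_6 {K S G : Type*} [Field K] [AddCommGroup S] [Module K S]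
    [FiniteDimensional K S] [Group G] (ρ : G →* (S ≃ₗ[K] S)) (y : S) (hy : y ≠ 0) :
    ∃! V : Submodule K S,
      y ∈ V ∧ (Set.range fun g : G => V.map (ρ g).toLinearMap).Finite ∧
      (∀ W : Submodule K S, y ∈ W →
          (Set.range fun g : G => W.map (ρ g).toLinearMap).Finite →
          Module.finrank K V ≤ Module.finrank K W) ∧
      V = sInf {W : Submodule K S |
          y ∈ W ∧ (Set.range fun g : G => W.map (ρ g).toLinearMap).Finite} := by
  set goods : Set (Submodule K S) :=
    {W : Submodule K S |
      y ∈ W ∧ (Set.range fun g : G => W.map (ρ g).toLinearMap).Finite} with hgoods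
  -- ⊤ is good
  have htop : (⊤ : Submodule K S) ∈ goods := by
    refine ⟨Submodule.mem_top, ?_⟩
    have : (Set.range fun g : G => (⊤ : Submodule K S).map (ρ g).toLinearMap)
        ⊆ {(⊤ : Submodule K S)} := by
      rintro _ ⟨g, rfl⟩
      simp [Submodule.map_top, LinearEquiv.range]
    exact (Set.finite_singleton _).subset this
  -- goods closed under ⊓
  have hinf : ∀ V W : Submodule K S, V ∈ goods → W ∈ goods → V ⊓ W ∈ goods := by
    rintro V W ⟨hyV, hV⟩ ⟨hyW, hW⟩
    refine ⟨⟨hyV, hyW⟩, ?_⟩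
    have hsub : (Set.range fun g : G => (V ⊓ W).map (ρ g).toLinearMap)
        ⊆ Set.image2 (· ⊓ ·) (Set.range fun g : G => V.map (ρ g).toLinearMap)
            (Set.range fun g : G => W.map (ρ g).toLinearMap) := by
      rintro _ ⟨g, rfl⟩
      exact ⟨_, ⟨g, rfl⟩, _, ⟨g, rfl⟩,
        (Submodule.map_inf _ (ρ g).injective).symm⟩
    exact (hV.image2 _ hW).subset hsub
  -- pick a good subspace of minimal finrank
  have hne : ((fun W : Submodule K S => Module.finrank K W) '' goods).Nonempty := ⟨_, ⊤, htop, rfl⟩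
  obtain ⟨V, hVgood, hVrank⟩ :
      ∃ V ∈ goods, Module.finrank K V = sInf ((fun W : Submodule K S => Module.finrank K W) '' goods) := by
    have := Nat.sInf_mem hne
    obtain ⟨V, hV, hV'⟩ := this
    exact ⟨V, hV, hV'⟩
  have hmin : ∀ W ∈ goods, Module.finrank K V ≤ Module.finrank K W := by
    intro W hW
    rw [hVrank]
    exact Nat.sInf_le ⟨W, hW, rfl⟩
  -- V ≤ W for every good W
  have hle : ∀ W ∈ goods, V ≤ W := by
    intro W hW
    have h1 : V ⊓ W ∈ goods := hinf V W hVgood hW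
    have h2 : Module.finrank K V ≤ Module.finrank K (V ⊓ W : Submodule K S) :=
      hmin _ h1
    have h3 : V ⊓ W = V := Submodule.eq_of_le_of_finrank_le inf_le_left h2
    exact (le_of_eq h3.symm).trans inf_le_right
  have hVinf : V = sInf goods :=
    le_antisymm (le_sInf fun W hW => hle W hW) (sInf_le hVgood)
  refine ⟨V, ⟨hVgood.1, hVgood.2, fun W h1 h2 => hmin W ⟨h1, h2⟩, hVinf⟩, ?_⟩
  rintro V' ⟨-, -, -, hV'⟩
  rw [hV', hVinf]
end

section
/- With V and M as in the Lotka-Volterra monodromy model (basis γ, Δ₁, Δ₂, δⱼ, Pⱼ with relation P₀+⋯+P_{p-1} = Δ₁-Δ₂+δ₀, and M acting as the monodromy around zero), the two-dimensional subspace H = span(γ, Δ₁ - Δ₂ + δ₀) satisfies Mᵖ(H) = H, and consequently the orbit {Mᵏ(H) : k ∈ ℤ} has at most p elements. -/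
/-- Symbols generating the homology model for `F = (xy)^p (x+y-1)`:
`γ, Δ₁, Δ₂, δ₀,…,δ_{p-1}, P₀,…,P_{p-1}`. -/
inductive LVSym (p : ℕ) : Type
  | gam : LVSym p
  | D1 : LVSym p
  | D2 : LVSym p
  | del : ZMod p → LVSym p
  | P : ZMod p → LVSym p
  deriving DecidableEq

/-- Basis vector of the free ℚ-vector space on the symbols. -/
noncomputable def LVe {p : ℕ} (s : LVSym p) : LVSym p →₀ ℚ := Finsupp.single s 1

/-- The single relation `P₀ + ⋯ + P_{p-1} - Δ₁ + Δ₂ - δ₀`. -/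
noncomputable def LVrel (p : ℕ) : LVSym p →₀ ℚ :=
  (∑ j ∈ Finset.range p, LVe (LVSym.P (j : ZMod p))) - LVe LVSym.D1 + LVe LVSym.D2
    - LVe (LVSym.del 0)

/-- The quotient space `V` of dimension `2p+2`. -/
abbrev LV (p : ℕ) : Type := (LVSym p →₀ ℚ) ⧸ Submodule.span ℚ {LVrel p}

/-- Class of a vector in the quotient. -/
noncomputable def LVcl {p : ℕ} (v : LVSym p →₀ ℚ) : LV p := Submodule.Quotient.mk v

/-- For the monodromy automorphism `M` of the Lotka–Volterra model, the
two-dimensional subspace `H = span(γ, Δ₁ - Δ₂ + δ₀)` satisfies `Mᵖ(H) = H`, so its orbit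
`{Mᵏ(H) : k ∈ ℤ}` has at most `p` elements. -/
theorem stmt_10 (p : ℕ) (hp : 1 ≤ p) (M : LV p ≃ₗ[ℚ] LV p)
    (hD1 : M (LVcl (LVe LVSym.D1)) = LVcl (LVe LVSym.D1))
    (hD2 : M (LVcl (LVe LVSym.D2)) = LVcl (LVe LVSym.D2))
    (hdel : ∀ j : ZMod p, M (LVcl (LVe (LVSym.del j))) = LVcl (LVe (LVSym.del (j + 1))))
    (hgam : M (LVcl (LVe LVSym.gam)) = LVcl (LVe LVSym.gam) + LVcl (LVe (LVSym.P 0)))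
    (hP : ∀ j : ℕ, j < p - 1 →
      M (LVcl (LVe (LVSym.P (j : ZMod p)))) = LVcl (LVe (LVSym.P ((j : ZMod p) + 1))))
    (hPlast : M (LVcl (LVe (LVSym.P ((p - 1 : ℕ) : ZMod p)))) =
      LVcl (LVe (LVSym.P 0)) + LVcl (LVe (LVSym.del 1)) - LVcl (LVe (LVSym.del 0))) :
    Submodule.map (M ^ p).toLinearMap
        (Submodule.span ℚ {LVcl (LVe LVSym.gam),
          LVcl (LVe LVSym.D1) - LVcl (LVe LVSym.D2) + LVcl (LVe (LVSym.del 0))}) =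
      Submodule.span ℚ {LVcl (LVe LVSym.gam),
        LVcl (LVe LVSym.D1) - LVcl (LVe LVSym.D2) + LVcl (LVe (LVSym.del 0))} ∧
    (Set.range fun k : ℤ => Submodule.map (M ^ k).toLinearMap
        (Submodule.span ℚ {LVcl (LVe LVSym.gam),
          LVcl (LVe LVSym.D1) - LVcl (LVe LVSym.D2) + LVcl (LVe (LVSym.del 0))})).ncard
      ≤ p := by
  classical
  set γv : LV p := LVcl (LVe LVSym.gam) with hγv
  set w : LV p := LVcl (LVe LVSym.D1) - LVcl (LVe LVSym.D2) + LVcl (LVe (LVSym.del 0)) with hwdef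
  set S : Submodule ℚ (LV p) := Submodule.span ℚ {γv, w} with hSdef
  -- the relation in the quotient
  have hrel : (∑ j ∈ Finset.range p, LVcl (LVe (LVSym.P (j : ZMod p)))) = w := by
    have h0 : LVcl (LVrel p) = 0 := by
      refine (Submodule.Quotient.mk_eq_zero _).2 (Submodule.mem_span_singleton_self _)
    have hmk : ∀ v : LVSym p →₀ ℚ, LVcl v = (Submodule.span ℚ {LVrel p}).mkQ v := fun _ => rfl
    unfold LVrel at h0
    simp only [hmk, map_sub, map_add, map_sum] at h0 ⊢
    have h2 : (∑ j ∈ Finset.range p, (Submodule.span ℚ {LVrel p}).mkQ (LVe (LVSym.P (j : ZMod p))))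
        - ((Submodule.span ℚ {LVrel p}).mkQ (LVe LVSym.D1)
          - (Submodule.span ℚ {LVrel p}).mkQ (LVe LVSym.D2)
          + (Submodule.span ℚ {LVrel p}).mkQ (LVe (LVSym.del 0))) = 0 := by
      refine Eq.trans ?_ h0; abel
    exact sub_eq_zero.mp h2
  -- powers applied
  have hpow : ∀ (k : ℕ) (x : LV p), (M ^ (k + 1)) x = M ((M ^ k) x) := by
    intro k x
    rw [pow_succ']; rfl
  -- action on w
  have hw : ∀ k : ℕ, (M ^ k) w =
      LVcl (LVe LVSym.D1) - LVcl (LVe LVSym.D2) + LVcl (LVe (LVSym.del (k : ZMod p))) := by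
    intro k
    induction k with
    | zero => simp [hwdef]
    | succ k ih =>
      rw [hpow, ih, map_add, map_sub, hD1, hD2, hdel]
      push_cast
      ring_nf
  have hwp : (M ^ p) w = w := by
    rw [hw p]
    simp [hwdef]
  -- action on γ
  have hγ : ∀ k : ℕ, k ≤ p → (M ^ k) γv =
      γv + ∑ j ∈ Finset.range k, LVcl (LVe (LVSym.P (j : ZMod p))) := by
    intro k
    induction k with
    | zero => intro _; simp
    | succ k ih =>
      intro hk
      rw [hpow, ih (Nat.le_of_succ_le hk), map_add, hγv, hgam, map_sum]
      have hstep : ∀ j ∈ Finset.range k,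
          M (LVcl (LVe (LVSym.P (j : ZMod p)))) = LVcl (LVe (LVSym.P (((j + 1 : ℕ) : ZMod p)))) := by
        intro j hj
        have hjlt : j < p - 1 := by
          have := Finset.mem_range.mp hj
          omega
        rw [hP j hjlt]
        push_cast
        ring_nf
      rw [Finset.sum_congr rfl hstep, Finset.sum_range_succ']
      push_cast
      abel
  have hγp : (M ^ p) γv = γv + w := by
    rw [hγ p le_rfl, hrel]
  -- generators are in S
  have hγS : γv ∈ S := Submodule.subset_span (Set.mem_insert _ _)
  have hwS : w ∈ S := Submodule.subset_span (Set.mem_insert_of_mem _ rfl)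
  -- first conjunct
  have hmain : Submodule.map (M ^ p).toLinearMap S = S := by
    rw [hSdef, Submodule.map_span, Set.image_insert_eq, Set.image_singleton]
    have e1 : (M ^ p).toLinearMap γv = γv + w := hγp
    have e2 : (M ^ p).toLinearMap w = w := hwp
    rw [e1, e2]
    apply le_antisymm
    · rw [Submodule.span_le]
      rintro x hx
      rcases hx with rfl | rfl
      · exact add_mem hγS hwS
      · exact hwS
    · rw [Submodule.span_le]
      rintro x hx
      have hγw : γv + w ∈ Submodule.span ℚ ({γv + w, w} : Set (LV p)) :=
        Submodule.subset_span (Set.mem_insert _ _)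
      have hw' : w ∈ Submodule.span ℚ ({γv + w, w} : Set (LV p)) :=
        Submodule.subset_span (Set.mem_insert_of_mem _ rfl)
      rcases hx with rfl | rfl
      · have h3 := sub_mem hγw hw'
        simpa using h3
      · exact hw'
  refine ⟨hmain, ?_⟩
  -- second conjunct: orbit has at most p elements
  set f : ℤ → Submodule ℚ (LV p) := fun k => Submodule.map (M ^ k).toLinearMap S with hf
  have hmap : ∀ (a b : LV p ≃ₗ[ℚ] LV p) (T : Submodule ℚ (LV p)),
      Submodule.map (a * b).toLinearMap T
        = Submodule.map a.toLinearMap (Submodule.map b.toLinearMap T) := by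
    intro a b T
    rw [← Submodule.map_comp]; rfl
  have hSz : Submodule.map (M ^ (p : ℤ)).toLinearMap S = S := by
    rw [zpow_natCast]; exact hmain
  have hmul : ∀ n : ℤ, Submodule.map (M ^ ((p : ℤ) * n)).toLinearMap S = S := by
    intro n
    induction n using Int.induction_on with
    | zero => simp [Submodule.map_id]
    | succ n ih =>
      have : (p : ℤ) * (n + 1) = (p : ℤ) * n + p := by ring
      rw [this, zpow_add, hmap, hSz, ih]
    | pred n ih =>
      have h1 : (p : ℤ) * (-n) = (p : ℤ) * (-n - 1) + p := by ring
      rw [h1, zpow_add, hmap, hSz] at ih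
      exact ih
  have hper : ∀ k : ℤ, f k = f (k % p) := by
    intro k
    have hk : k = k % p + (p : ℤ) * (k / p) := by
      rw [add_comm]
      exact (Int.mul_ediv_add_emod k p).symm
    have hgoal : Submodule.map (M ^ (k % (p : ℤ) + (p : ℤ) * (k / p))).toLinearMap S
        = Submodule.map (M ^ (k % (p : ℤ))).toLinearMap S := by
      rw [zpow_add, hmap, hmul]
    rw [← hk] at hgoal
    simpa only [hf] using hgoal
  have hsub : Set.range f ⊆ f '' Set.Ico (0 : ℤ) (p : ℤ) := by
    rintro x ⟨k, rfl⟩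
    have hp0 : (0 : ℤ) < (p : ℤ) := by exact_mod_cast hp
    exact ⟨k % p, ⟨Int.emod_nonneg k (by omega), Int.emod_lt_of_pos k hp0⟩, (hper k).symm⟩
  calc (Set.range f).ncard ≤ (f '' Set.Ico (0 : ℤ) (p : ℤ)).ncard :=
        Set.ncard_le_ncard hsub ((Set.finite_Ico _ _).image f)
    _ ≤ (Set.Ico (0 : ℤ) (p : ℤ)).ncard := Set.ncard_image_le (Set.finite_Ico _ _)
    _ = p := by
        rw [← Finset.coe_Ico, Set.ncard_coe_finset, Int.card_Ico]
        simp
end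

section
/- With V, M, H as in the Lotka-Volterra monodromy model, for k = 1, ..., p-1 one has Mᵏ(H) = span(γ + P₀ + ⋯ + P_{k-1}, Δ₁ - Δ₂ + δ_k), and Mᵖ(H) = H. -/
/-- For the monodromy `M` of the Lotka–Volterra model and
`H = span(γ, Δ₁ - Δ₂ + δ₀)`, one has
`Mᵏ(H) = span(γ + P₀ + ⋯ + P_{k-1}, Δ₁ - Δ₂ + δ_k)` for `k = 1, …, p-1`,
and `Mᵖ(H) = H`. -/
theorem stmt_11 (p : ℕ) (hp : 1 ≤ p) (M : LV p ≃ₗ[ℚ] LV p)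
    (hD1 : M (LVcl (LVe LVSym.D1)) = LVcl (LVe LVSym.D1))
    (hD2 : M (LVcl (LVe LVSym.D2)) = LVcl (LVe LVSym.D2))
    (hdel : ∀ j : ZMod p, M (LVcl (LVe (LVSym.del j))) = LVcl (LVe (LVSym.del (j + 1))))
    (hgam : M (LVcl (LVe LVSym.gam)) = LVcl (LVe LVSym.gam) + LVcl (LVe (LVSym.P 0)))
    (hP : ∀ j : ℕ, j < p - 1 →
      M (LVcl (LVe (LVSym.P (j : ZMod p)))) = LVcl (LVe (LVSym.P ((j : ZMod p) + 1))))
    (hPlast : M (LVcl (LVe (LVSym.P ((p - 1 : ℕ) : ZMod p)))) =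
      LVcl (LVe (LVSym.P 0)) + LVcl (LVe (LVSym.del 1)) - LVcl (LVe (LVSym.del 0))) :
    (∀ k : ℕ, 1 ≤ k → k ≤ p - 1 →
      Submodule.map (M ^ k).toLinearMap
          (Submodule.span ℚ {LVcl (LVe LVSym.gam),
            LVcl (LVe LVSym.D1) - LVcl (LVe LVSym.D2) + LVcl (LVe (LVSym.del 0))}) =
        Submodule.span ℚ
          {LVcl (LVe LVSym.gam) + ∑ j ∈ Finset.range k, LVcl (LVe (LVSym.P (j : ZMod p))),
            LVcl (LVe LVSym.D1) - LVcl (LVe LVSym.D2) + LVcl (LVe (LVSym.del (k : ZMod p)))}) ∧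
    Submodule.map (M ^ p).toLinearMap
        (Submodule.span ℚ {LVcl (LVe LVSym.gam),
          LVcl (LVe LVSym.D1) - LVcl (LVe LVSym.D2) + LVcl (LVe (LVSym.del 0))}) =
      Submodule.span ℚ {LVcl (LVe LVSym.gam),
        LVcl (LVe LVSym.D1) - LVcl (LVe LVSym.D2) + LVcl (LVe (LVSym.del 0))} := by
  classical
  -- abbreviations
  set g : LV p := LVcl (LVe LVSym.gam) with hg_def
  set h₀ : LV p := LVcl (LVe LVSym.D1) - LVcl (LVe LVSym.D2) + LVcl (LVe (LVSym.del 0))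
    with hh0_def
  have hpow : ∀ (n : ℕ) (x : LV p), (M ^ (n + 1)) x = M ((M ^ n) x) := by
    intro n x
    rw [pow_succ']
    rfl
  -- the relation in the quotient
  have hrel : (∑ j ∈ Finset.range p, LVcl (LVe (LVSym.P (j : ZMod p)))) = h₀ := by
    have h0 : LVcl (LVrel p) = (0 : LV p) := by
      have : LVrel p ∈ Submodule.span ℚ {LVrel p} :=
        Submodule.mem_span_singleton_self _
      simpa [LVcl, Submodule.Quotient.mk_eq_zero] using this
    have h1 : LVcl (LVrel p)
        = (∑ j ∈ Finset.range p, LVcl (LVe (LVSym.P (j : ZMod p))))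
          - LVcl (LVe LVSym.D1) + LVcl (LVe LVSym.D2) - LVcl (LVe (LVSym.del 0)) := by
      unfold LVrel LVcl
      rw [← Submodule.mkQ_apply, map_sub, map_add, map_sub, map_sum]
      simp [Submodule.mkQ_apply]
      rfl
    rw [h0] at h1
    rw [hh0_def, ← sub_eq_zero]
    have heq : (∑ j ∈ Finset.range p, LVcl (LVe (LVSym.P (j : ZMod p))))
        - (LVcl (LVe LVSym.D1) - LVcl (LVe LVSym.D2) + LVcl (LVe (LVSym.del 0)))
        = (∑ j ∈ Finset.range p, LVcl (LVe (LVSym.P (j : ZMod p))))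
          - LVcl (LVe LVSym.D1) + LVcl (LVe LVSym.D2) - LVcl (LVe (LVSym.del 0)) := by abel
    rw [heq]
    exact h1.symm
  -- M^k on h₀
  have hB : ∀ k : ℕ, (M ^ k) h₀
      = LVcl (LVe LVSym.D1) - LVcl (LVe LVSym.D2) + LVcl (LVe (LVSym.del (k : ZMod p))) := by
    intro k
    induction k with
    | zero => simp [hh0_def]
    | succ n ih =>
      rw [hpow, ih, map_add, map_sub, hD1, hD2, hdel]
      push_cast
      ring_nf
  -- M^k on g, for k ≤ p - 1
  have hA : ∀ k : ℕ, k ≤ p - 1 → (M ^ k) g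
      = g + ∑ j ∈ Finset.range k, LVcl (LVe (LVSym.P (j : ZMod p))) := by
    intro k hk
    induction k with
    | zero => simp
    | succ n ih =>
      have hn : n ≤ p - 1 := Nat.le_of_succ_le hk
      rw [hpow, ih hn, map_add, hgam, map_sum]
      have hstep : ∀ j ∈ Finset.range n,
          M (LVcl (LVe (LVSym.P (j : ZMod p)))) = LVcl (LVe (LVSym.P (((j + 1 : ℕ) : ZMod p)))) := by
        intro j hj
        have hj' : j < p - 1 := lt_of_lt_of_le (Finset.mem_range.mp hj) hn
        rw [hP j hj']
        push_cast
        ring_nf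
      rw [Finset.sum_congr rfl hstep, Finset.sum_range_succ']
      push_cast
      abel
  -- M^p on g
  have hMg : (M ^ p) g = g + h₀ := by
    obtain ⟨q, rfl⟩ : ∃ q, p = q + 1 := ⟨p - 1, (Nat.succ_pred_eq_of_pos hp).symm⟩
    have hq : q ≤ q + 1 - 1 := by omega
    rw [hpow, hA q hq, map_add, hgam, map_sum]
    have hstep : ∀ j ∈ Finset.range q,
        M (LVcl (LVe (LVSym.P (j : ZMod (q + 1))))) =
          LVcl (LVe (LVSym.P (((j + 1 : ℕ) : ZMod (q + 1))))) := by
      intro j hj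
      have hj' : j < q + 1 - 1 := by
        have := Finset.mem_range.mp hj; omega
      rw [hP j hj']
      push_cast
      ring_nf
    rw [Finset.sum_congr rfl hstep, ← hrel, Finset.sum_range_succ']
    push_cast
    abel
  -- map of span of pair
  have hmap : ∀ (k : ℕ),
      Submodule.map (M ^ k).toLinearMap (Submodule.span ℚ {g, h₀})
        = Submodule.span ℚ {(M ^ k) g, (M ^ k) h₀} := by
    intro k
    rw [Submodule.map_span, Set.image_insert_eq, Set.image_singleton]
    rfl
  constructor
  · intro k hk1 hk2
    rw [hmap k, hA k hk2, hB k]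
  · rw [hmap p, hMg, hB p]
    have : ((p : ZMod p)) = 0 := ZMod.natCast_self p
    rw [this]
    rw [← hh0_def]
    -- span {g + h₀, h₀} = span {g, h₀}
    apply le_antisymm
    · rw [Submodule.span_le]
      rintro x hx
      simp only [Set.mem_insert_iff, Set.mem_singleton_iff] at hx
      have hg' : g ∈ Submodule.span ℚ {g, h₀} :=
        Submodule.subset_span (Set.mem_insert _ _)
      have hh' : h₀ ∈ Submodule.span ℚ {g, h₀} :=
        Submodule.subset_span (Set.mem_insert_of_mem _ rfl)
      rcases hx with rfl | rfl
      · exact add_mem hg' hh'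
      · exact hh'
    · rw [Submodule.span_le]
      rintro x hx
      simp only [Set.mem_insert_iff, Set.mem_singleton_iff] at hx
      have hgh : g + h₀ ∈ Submodule.span ℚ {g + h₀, h₀} :=
        Submodule.subset_span (Set.mem_insert _ _)
      have hh' : h₀ ∈ Submodule.span ℚ {g + h₀, h₀} :=
        Submodule.subset_span (Set.mem_insert_of_mem _ rfl)
      rcases hx with rfl | rfl
      · have := sub_mem hgh hh'
        simpa using this
      · exact hh'
end

section
/- With V, M as in the Lotka-Volterra monodromy model, and the bilinear intersection form on V determined by γ·P_{p-1} = -1, γ·Pⱼ = 0 for j < p-1, γ·δ₀ = -1, γ·δⱼ = 0 for j ≥ 1, γ·Δ₁ = -1, γ·Δ₂ = -1, the generators of Mᵏ(H) for k = 1,...,p-1 satisfy γ·(γ + P₀ + ⋯ + P_{k-1}) = 0 and γ·(Δ₁ - Δ₂ + δ_k) = 0; hence each Mᵏ(H) is invariant under the Picard-Lefschetz transvection M_c(v) = v + (v·γ)γ. -/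
/-- With the intersection form `B` on the Lotka–Volterra model
(`γ·γ = 0`, `γ·P_{p-1} = -1`, `γ·Pⱼ = 0` for `j < p-1`, `γ·δ₀ = -1`, `γ·δⱼ = 0`
for `j ≥ 1`, `γ·Δ₁ = γ·Δ₂ = -1`), the generators of `Mᵏ(H)`, `k = 1, …, p-1`,
pair to zero with `γ`; hence each `Mᵏ(H)` is invariant under the Picard–Lefschetz
transvection `M_c(v) = v + (v·γ) γ`. -/
theorem stmt_12 (p : ℕ) (hp : 2 ≤ p) (M : LV p ≃ₗ[ℚ] LV p)
    (hD1 : M (LVcl (LVe LVSym.D1)) = LVcl (LVe LVSym.D1))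
    (hD2 : M (LVcl (LVe LVSym.D2)) = LVcl (LVe LVSym.D2))
    (hdel : ∀ j : ZMod p, M (LVcl (LVe (LVSym.del j))) = LVcl (LVe (LVSym.del (j + 1))))
    (hgam : M (LVcl (LVe LVSym.gam)) = LVcl (LVe LVSym.gam) + LVcl (LVe (LVSym.P 0)))
    (hP : ∀ j : ℕ, j < p - 1 →
      M (LVcl (LVe (LVSym.P (j : ZMod p)))) = LVcl (LVe (LVSym.P ((j : ZMod p) + 1))))
    (hPlast : M (LVcl (LVe (LVSym.P ((p - 1 : ℕ) : ZMod p)))) =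
      LVcl (LVe (LVSym.P 0)) + LVcl (LVe (LVSym.del 1)) - LVcl (LVe (LVSym.del 0)))
    (B : LV p →ₗ[ℚ] LV p →ₗ[ℚ] ℚ)
    (hanti : ∀ u v : LV p, B u v = -B v u)
    (hgg : B (LVcl (LVe LVSym.gam)) (LVcl (LVe LVSym.gam)) = 0)
    (hgPlast : B (LVcl (LVe LVSym.gam)) (LVcl (LVe (LVSym.P ((p - 1 : ℕ) : ZMod p)))) = -1)
    (hgP : ∀ j : ℕ, j < p - 1 →
      B (LVcl (LVe LVSym.gam)) (LVcl (LVe (LVSym.P (j : ZMod p)))) = 0)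
    (hgd0 : B (LVcl (LVe LVSym.gam)) (LVcl (LVe (LVSym.del 0))) = -1)
    (hgd : ∀ j : ℕ, 1 ≤ j → j ≤ p - 1 →
      B (LVcl (LVe LVSym.gam)) (LVcl (LVe (LVSym.del (j : ZMod p)))) = 0)
    (hgD1 : B (LVcl (LVe LVSym.gam)) (LVcl (LVe LVSym.D1)) = -1)
    (hgD2 : B (LVcl (LVe LVSym.gam)) (LVcl (LVe LVSym.D2)) = -1) :
    ∀ k : ℕ, 1 ≤ k → k ≤ p - 1 →
      B (LVcl (LVe LVSym.gam))
          (LVcl (LVe LVSym.gam) + ∑ j ∈ Finset.range k, LVcl (LVe (LVSym.P (j : ZMod p)))) = 0 ∧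
      B (LVcl (LVe LVSym.gam))
          (LVcl (LVe LVSym.D1) - LVcl (LVe LVSym.D2) + LVcl (LVe (LVSym.del (k : ZMod p)))) = 0 ∧
      ∀ v ∈ Submodule.map (M ^ k).toLinearMap
          (Submodule.span ℚ {LVcl (LVe LVSym.gam),
            LVcl (LVe LVSym.D1) - LVcl (LVe LVSym.D2) + LVcl (LVe (LVSym.del 0))}),
        v + B v (LVcl (LVe LVSym.gam)) • LVcl (LVe LVSym.gam) ∈
          Submodule.map (M ^ k).toLinearMap
            (Submodule.span ℚ {LVcl (LVe LVSym.gam),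
              LVcl (LVe LVSym.D1) - LVcl (LVe LVSym.D2) + LVcl (LVe (LVSym.del 0))}) := by
  intro k hk1 hk2
  have h1 : B (LVcl (LVe LVSym.gam))
      (LVcl (LVe LVSym.gam) + ∑ j ∈ Finset.range k, LVcl (LVe (LVSym.P (j : ZMod p)))) = 0 := by
    rw [map_add, map_sum, hgg, Finset.sum_eq_zero, add_zero]
    intro j hj
    exact hgP j (lt_of_lt_of_le (Finset.mem_range.mp hj) hk2)
  have h2 : B (LVcl (LVe LVSym.gam))
      (LVcl (LVe LVSym.D1) - LVcl (LVe LVSym.D2) + LVcl (LVe (LVSym.del (k : ZMod p)))) = 0 := by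
    rw [map_add, map_sub, hgD1, hgD2, hgd k hk1 hk2]
    ring
  refine ⟨h1, h2, ?_⟩
  -- compute `M^k` on the generators
  have hMg : ∀ m : ℕ, m ≤ p - 1 → (M ^ m) (LVcl (LVe LVSym.gam)) =
      LVcl (LVe LVSym.gam) + ∑ j ∈ Finset.range m, LVcl (LVe (LVSym.P (j : ZMod p))) := by
    intro m
    induction m with
    | zero => simp
    | succ n ih =>
      intro hm
      have hn : n ≤ p - 1 := le_of_lt (Nat.lt_of_succ_le hm)
      rw [pow_succ']
      show M ((M ^ n) (LVcl (LVe LVSym.gam))) = _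
      rw [ih hn, map_add, map_sum, hgam]
      have hsum : ∑ j ∈ Finset.range n, M (LVcl (LVe (LVSym.P (j : ZMod p)))) =
          ∑ j ∈ Finset.range n, LVcl (LVe (LVSym.P (((j + 1 : ℕ) : ZMod p)))) := by
        refine Finset.sum_congr rfl fun j hj => ?_
        have hjlt : j < p - 1 := lt_of_lt_of_le (Finset.mem_range.mp hj) hn
        rw [hP j hjlt]
        push_cast
        ring_nf
      rw [hsum, Finset.sum_range_succ']
      push_cast
      abel
  have hMd : ∀ m : ℕ, (M ^ m) (LVcl (LVe LVSym.D1) - LVcl (LVe LVSym.D2)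
        + LVcl (LVe (LVSym.del 0))) =
      LVcl (LVe LVSym.D1) - LVcl (LVe LVSym.D2) + LVcl (LVe (LVSym.del (m : ZMod p))) := by
    intro m
    induction m with
    | zero => simp
    | succ n ih =>
      rw [pow_succ']
      show M ((M ^ n) _) = _
      rw [ih, map_add, map_sub, hD1, hD2, hdel]
      push_cast
      ring_nf
  intro v hv
  have hBv : B v (LVcl (LVe LVSym.gam)) = 0 := by
    rw [Submodule.map_span, Set.image_insert_eq, Set.image_singleton,
      Submodule.mem_span_pair] at hv
    obtain ⟨a, b, rfl⟩ := hv
    have e1 : ((M ^ k).toLinearMap) (LVcl (LVe LVSym.gam)) =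
        LVcl (LVe LVSym.gam) + ∑ j ∈ Finset.range k, LVcl (LVe (LVSym.P (j : ZMod p))) :=
      hMg k hk2
    have e2 : ((M ^ k).toLinearMap) (LVcl (LVe LVSym.D1) - LVcl (LVe LVSym.D2)
          + LVcl (LVe (LVSym.del 0))) =
        LVcl (LVe LVSym.D1) - LVcl (LVe LVSym.D2) + LVcl (LVe (LVSym.del (k : ZMod p))) :=
      hMd k
    rw [e1, e2, map_add, map_smul, map_smul, LinearMap.add_apply, LinearMap.smul_apply,
      LinearMap.smul_apply, hanti _ (LVcl (LVe LVSym.gam)), h1,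
      hanti _ (LVcl (LVe LVSym.gam)), h2]
    simp
  rw [hBv, zero_smul, add_zero]
  exact hv
end

section
/- Consider the free ℚ-vector space spanned by symbols γ, Δ₁, Δ₂, Q₀,...,Q_{q-1}, P₀,...,P_{p-1} modulo the relations Q₀+⋯+Q_{q-1} = Δ₂-Δ₁ and P₀+⋯+P_{p-1} = Δ₁-Δ₂ (so dim = p+q+1). Let mon₀ be defined by mon₀(Qⱼ) = Q_{j+m mod q}, mon₀(P_k) = P_{k-n mod p}, mon₀(Δⱼ) = Δⱼ, mon₀(γ) = γ + Q₀ + ⋯ + Q_{m-1} + P₀ + ⋯ + P_{-n-1}, where pm + qn = 1, m > 0 > n. Then mon₀ is well-defined and mon₀^{pq}(γ) = γ + Δ₂ - Δ₁. -/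
/-- Symbols generating the homology model in the parabolic case
`F = x^p (y² + x - 1)^q`: `γ, Δ₁, Δ₂, Q₀,…,Q_{q-1}, P₀,…,P_{p-1}`. -/
inductive PSym (p q : ℕ) : Type
  | gam : PSym p q
  | D1 : PSym p q
  | D2 : PSym p q
  | Q : ZMod q → PSym p q
  | P : ZMod p → PSym p q
  deriving DecidableEq

/-- Basis vector of the free ℚ-vector space on the symbols. -/
noncomputable def Pe {p q : ℕ} (s : PSym p q) : PSym p q →₀ ℚ := Finsupp.single s 1

/-- First relation: `Q₀ + ⋯ + Q_{q-1} - Δ₂ + Δ₁`. -/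
noncomputable def Prel₁ (p q : ℕ) : PSym p q →₀ ℚ :=
  (∑ j ∈ Finset.range q, Pe (PSym.Q (j : ZMod q))) - Pe PSym.D2 + Pe PSym.D1

/-- Second relation: `P₀ + ⋯ + P_{p-1} - Δ₁ + Δ₂`. -/
noncomputable def Prel₂ (p q : ℕ) : PSym p q →₀ ℚ :=
  (∑ j ∈ Finset.range p, Pe (PSym.P (j : ZMod p))) - Pe PSym.D1 + Pe PSym.D2

/-- The quotient space of dimension `p + q + 1`. -/
abbrev PV (p q : ℕ) : Type :=
  (PSym p q →₀ ℚ) ⧸ Submodule.span ℚ {Prel₁ p q, Prel₂ p q}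

/-- Class of a vector in the quotient. -/
noncomputable def Pcl {p q : ℕ} (v : PSym p q →₀ ℚ) : PV p q := Submodule.Quotient.mk v

lemma sum_range_zmod' {A : Type*} [AddCommMonoid A] (q : ℕ) [NeZero q] (g : ZMod q → A) :
    ∑ j ∈ Finset.range q, g (j : ZMod q) = ∑ c : ZMod q, g c := by
  refine Finset.sum_nbij' (fun j => ((j : ℕ) : ZMod q)) (fun c => c.val)
    (fun a _ => Finset.mem_univ _)
    (fun c _ => Finset.mem_range.2 (ZMod.val_lt c))
    (fun a ha => ZMod.val_natCast_of_lt (Finset.mem_range.1 ha))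
    (fun c _ => ?_)
    (fun a _ => rfl)
  simp [ZMod.natCast_val, ZMod.cast_id]

lemma sum_range_mul_zmod' {A : Type*} [AddCommMonoid A] (q : ℕ) [NeZero q] (N : ℕ)
    (g : ZMod q → A) :
    ∑ t ∈ Finset.range (N * q), g ((t : ℕ) : ZMod q) = N • ∑ c : ZMod q, g c := by
  induction N with
  | zero => simp
  | succ N ih =>
    rw [Nat.succ_mul, Finset.sum_range_add, ih, succ_nsmul]
    congr 1
    rw [← sum_range_zmod' q g]
    apply Finset.sum_congr rfl
    intro i _
    congr 1
    push_cast
    simp [ZMod.natCast_self]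

lemma sum_shift_mul_zmod' {A : Type*} [AddCommMonoid A] (q : ℕ) [NeZero q]
    (a b c : ZMod q) (hb : b * c = 1) (g : ZMod q → A) :
    ∑ x : ZMod q, g (a + x * b) = ∑ x : ZMod q, g x := by
  apply Fintype.sum_bijective (fun x => a + x * b) ?_ _ _ (fun _ => rfl)
  apply Function.bijective_iff_has_inverse.2
  refine ⟨fun y => (y - a) * c, fun x => ?_, fun y => ?_⟩
  · show (a + x * b - a) * c = x
    rw [add_sub_cancel_left, mul_assoc, hb, mul_one]
  · show a + (y - a) * c * b = y
    rw [mul_assoc, mul_comm c b, hb, mul_one, add_sub_cancel]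

/- ### the monodromy on the free module -/

noncomputable def Pmf (p q : ℕ) (m n : ℤ) : PSym p q → (PSym p q →₀ ℚ)
  | PSym.gam => Pe PSym.gam + ∑ j ∈ Finset.range m.toNat, Pe (PSym.Q (j : ZMod q))
      + ∑ j ∈ Finset.range (-n).toNat, Pe (PSym.P (j : ZMod p))
  | PSym.D1 => Pe PSym.D1
  | PSym.D2 => Pe PSym.D2
  | PSym.Q j => Pe (PSym.Q (j + (m : ZMod q)))
  | PSym.P k => Pe (PSym.P (k - (n : ZMod p)))

noncomputable def PmF (p q : ℕ) (m n : ℤ) : (PSym p q →₀ ℚ) →ₗ[ℚ] (PSym p q →₀ ℚ) :=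
  Finsupp.lift _ ℚ _ (Pmf p q m n)

lemma PmF_single (p q : ℕ) (m n : ℤ) (s : PSym p q) :
    PmF p q m n (Pe s) = Pmf p q m n s := by
  rw [PmF, Pe, Finsupp.lift_apply, Finsupp.sum_single_index (by simp), one_smul]

lemma PmF_rel₁ (p q : ℕ) [NeZero q] (m n : ℤ) : PmF p q m n (Prel₁ p q) = Prel₁ p q := by
  rw [Prel₁, map_add, map_sub, map_sum]
  simp only [PmF_single, Pmf]
  congr 2
  rw [sum_range_zmod' q (fun c => Pe (PSym.Q (c + (m : ZMod q)))),
      sum_range_zmod' q (fun c => Pe (PSym.Q c))]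
  exact Fintype.sum_equiv (Equiv.addRight ((m : ZMod q))) _ _ (fun x => rfl)

lemma PmF_rel₂ (p q : ℕ) [NeZero p] (m n : ℤ) : PmF p q m n (Prel₂ p q) = Prel₂ p q := by
  rw [Prel₂, map_add, map_sub, map_sum]
  simp only [PmF_single, Pmf]
  congr 2
  rw [sum_range_zmod' p (fun c => Pe (PSym.P (c - (n : ZMod p)))),
      sum_range_zmod' p (fun c => Pe (PSym.P c))]
  exact Fintype.sum_equiv (Equiv.subRight ((n : ZMod p))) _ _ (fun x => rfl)

lemma Pspan_le_comap (p q : ℕ) [NeZero p] [NeZero q] (m n : ℤ) :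
    Submodule.span ℚ {Prel₁ p q, Prel₂ p q} ≤
      (Submodule.span ℚ {Prel₁ p q, Prel₂ p q}).comap (PmF p q m n) := by
  rw [Submodule.span_le]
  intro x hx
  simp only [Set.mem_insert_iff, Set.mem_singleton_iff] at hx
  rcases hx with rfl | rfl
  · show Prel₁ p q ∈ Submodule.comap (PmF p q m n) (Submodule.span ℚ {Prel₁ p q, Prel₂ p q})
    rw [Submodule.mem_comap, PmF_rel₁]
    exact Submodule.subset_span (by simp)
  · show Prel₂ p q ∈ Submodule.comap (PmF p q m n) (Submodule.span ℚ {Prel₁ p q, Prel₂ p q})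
    rw [Submodule.mem_comap, PmF_rel₂]
    exact Submodule.subset_span (by simp)

noncomputable def PM (p q : ℕ) [NeZero p] [NeZero q] (m n : ℤ) : PV p q →ₗ[ℚ] PV p q :=
  Submodule.mapQ _ _ (PmF p q m n) (Pspan_le_comap p q m n)

lemma PM_cl (p q : ℕ) [NeZero p] [NeZero q] (m n : ℤ) (v : PSym p q →₀ ℚ) :
    PM p q m n (Pcl v) = Pcl (PmF p q m n v) :=
  Submodule.mapQ_apply _ _ _ v

lemma Pcl_add {p q : ℕ} (v w : PSym p q →₀ ℚ) : Pcl (v + w) = Pcl v + Pcl w := rfl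
lemma Pcl_sub {p q : ℕ} (v w : PSym p q →₀ ℚ) : Pcl (v - w) = Pcl v - Pcl w := rfl
lemma Pcl_sum {p q : ℕ} {ι : Type*} (s : Finset ι) (f : ι → (PSym p q →₀ ℚ)) :
    Pcl (∑ i ∈ s, f i) = ∑ i ∈ s, Pcl (f i) :=
  map_sum (Submodule.mkQ _) f s

/-- The monodromy `mon₀` around `t = 0` (given on generators by
`Qⱼ ↦ Q_{j+m}`, `P_k ↦ P_{k-n}`, `Δⱼ ↦ Δⱼ`,
`γ ↦ γ + Q₀ + ⋯ + Q_{m-1} + P₀ + ⋯ + P_{-n-1}`, where `pm + qn = 1`, `m > 0 ≥ n`)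
is well defined on the quotient, and `mon₀^{pq} γ = γ + Δ₂ - Δ₁`. -/
theorem stmt_13 (p q : ℕ) (hp : 1 < p) (hq : 1 < q) (hpq : Nat.Coprime p q)
    (m n : ℤ) (hmn : (p : ℤ) * m + (q : ℤ) * n = 1)
    (hm0 : 0 < m) (hmq : m < (q : ℤ)) (hnp : -(p : ℤ) < n) (hn0 : n ≤ 0) :
    ∃ M : PV p q →ₗ[ℚ] PV p q,
      (∀ j : ZMod q, M (Pcl (Pe (PSym.Q j))) = Pcl (Pe (PSym.Q (j + (m : ZMod q))))) ∧
      (∀ k : ZMod p, M (Pcl (Pe (PSym.P k))) = Pcl (Pe (PSym.P (k - (n : ZMod p))))) ∧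
      M (Pcl (Pe PSym.D1)) = Pcl (Pe PSym.D1) ∧
      M (Pcl (Pe PSym.D2)) = Pcl (Pe PSym.D2) ∧
      M (Pcl (Pe PSym.gam)) = Pcl (Pe PSym.gam)
          + ∑ j ∈ Finset.range m.toNat, Pcl (Pe (PSym.Q (j : ZMod q)))
          + ∑ j ∈ Finset.range (-n).toNat, Pcl (Pe (PSym.P (j : ZMod p))) ∧
      (M ^ (p * q)) (Pcl (Pe PSym.gam)) =
        Pcl (Pe PSym.gam) + Pcl (Pe PSym.D2) - Pcl (Pe PSym.D1) := by
  haveI : NeZero p := ⟨by omega⟩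
  haveI : NeZero q := ⟨by omega⟩
  have hQ : ∀ j : ZMod q, PM p q m n (Pcl (Pe (PSym.Q j)))
      = Pcl (Pe (PSym.Q (j + (m : ZMod q)))) := by
    intro j; rw [PM_cl, PmF_single]; rfl
  have hP : ∀ k : ZMod p, PM p q m n (Pcl (Pe (PSym.P k)))
      = Pcl (Pe (PSym.P (k - (n : ZMod p)))) := by
    intro k; rw [PM_cl, PmF_single]; rfl
  have hg : PM p q m n (Pcl (Pe PSym.gam)) = Pcl (Pe PSym.gam)
      + ∑ j ∈ Finset.range m.toNat, Pcl (Pe (PSym.Q (j : ZMod q)))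
      + ∑ j ∈ Finset.range (-n).toNat, Pcl (Pe (PSym.P (j : ZMod p))) := by
    rw [PM_cl, PmF_single]
    show Pcl (_ + _ + _) = _
    rw [Pcl_add, Pcl_add, Pcl_sum, Pcl_sum]
  -- iterates on the generators
  have hQi : ∀ (i : ℕ) (j : ZMod q), (PM p q m n ^ i) (Pcl (Pe (PSym.Q j)))
      = Pcl (Pe (PSym.Q (j + (i : ZMod q) * (m : ZMod q)))) := by
    intro i
    induction i with
    | zero => intro j; simp
    | succ i ih =>
      intro j
      rw [pow_succ, Module.End.mul_apply, hQ j, ih]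
      congr 3
      push_cast
      ring
  have hPi : ∀ (i : ℕ) (k : ZMod p), (PM p q m n ^ i) (Pcl (Pe (PSym.P k)))
      = Pcl (Pe (PSym.P (k - (i : ZMod p) * (n : ZMod p)))) := by
    intro i
    induction i with
    | zero => intro k; simp
    | succ i ih =>
      intro k
      rw [pow_succ, Module.End.mul_apply, hP k, ih]
      congr 3
      push_cast
      ring
  have hgi : ∀ i : ℕ, (PM p q m n ^ i) (Pcl (Pe PSym.gam))
      = Pcl (Pe PSym.gam) + ∑ t ∈ Finset.range i,
        ((∑ j ∈ Finset.range m.toNat,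
            Pcl (Pe (PSym.Q ((j : ZMod q) + (t : ZMod q) * (m : ZMod q)))))
         + ∑ j ∈ Finset.range (-n).toNat,
            Pcl (Pe (PSym.P ((j : ZMod p) - (t : ZMod p) * (n : ZMod p))))) := by
    intro i
    induction i with
    | zero => simp
    | succ i ih =>
      rw [pow_succ, Module.End.mul_apply, hg, map_add, map_add, map_sum, map_sum, ih]
      rw [Finset.sum_range_succ]
      have e1 : ∀ j ∈ Finset.range m.toNat,
          (PM p q m n ^ i) (Pcl (Pe (PSym.Q (j : ZMod q))))
          = Pcl (Pe (PSym.Q ((j : ZMod q) + (i : ZMod q) * (m : ZMod q)))) :=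
        fun j _ => hQi i _
      have e2 : ∀ j ∈ Finset.range (-n).toNat,
          (PM p q m n ^ i) (Pcl (Pe (PSym.P (j : ZMod p))))
          = Pcl (Pe (PSym.P ((j : ZMod p) - (i : ZMod p) * (n : ZMod p)))) :=
        fun j _ => hPi i _
      rw [Finset.sum_congr rfl e1, Finset.sum_congr rfl e2]
      abel
  refine ⟨PM p q m n, hQ, hP, by rw [PM_cl, PmF_single]; rfl, by rw [PM_cl, PmF_single]; rfl, hg, ?_⟩
  -- arithmetic facts
  have hbq : (m : ZMod q) * (p : ZMod q) = 1 := by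
    have h : (((p : ℤ) * m + (q : ℤ) * n : ℤ) : ZMod q) = ((1 : ℤ) : ZMod q) := by rw [hmn]
    push_cast at h
    rw [ZMod.natCast_self] at h
    linear_combination h
  have hbp : (-(n : ZMod p)) * (-(q : ZMod p)) = 1 := by
    have h : (((p : ℤ) * m + (q : ℤ) * n : ℤ) : ZMod p) = ((1 : ℤ) : ZMod p) := by rw [hmn]
    push_cast at h
    rw [ZMod.natCast_self] at h
    linear_combination h
  have key : m.toNat * p = (-n).toNat * q + 1 := by
    have h1 : (m.toNat : ℤ) = m := Int.toNat_of_nonneg hm0.le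
    have h2 : ((-n).toNat : ℤ) = -n := Int.toNat_of_nonneg (by omega)
    have : ((m.toNat * p : ℕ) : ℤ) = (((-n).toNat * q + 1 : ℕ) : ℤ) := by
      push_cast
      rw [h1, h2]
      linear_combination hmn
    exact_mod_cast this
  -- sums of classes over all of ZMod
  have hQsum : ∑ c : ZMod q, (Pcl (Pe (PSym.Q c)) : PV p q)
      = Pcl (Pe PSym.D2) - Pcl (Pe PSym.D1) := by
    have h0 : Pcl (Prel₁ p q) = 0 :=
      (Submodule.Quotient.mk_eq_zero _).2 (Submodule.subset_span (by simp))
    change Pcl ((∑ j ∈ Finset.range q, Pe (PSym.Q (j : ZMod q))) - Pe PSym.D2 + Pe PSym.D1) = (0 : PV p q) at h0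
    rw [Pcl_add, Pcl_sub, Pcl_sum, sub_add, sub_eq_zero] at h0
    rw [← sum_range_zmod' q (fun c => (Pcl (Pe (PSym.Q c)) : PV p q)), h0]
  have hPsum : ∑ c : ZMod p, (Pcl (Pe (PSym.P c)) : PV p q)
      = Pcl (Pe PSym.D1) - Pcl (Pe PSym.D2) := by
    have h0 : Pcl (Prel₂ p q) = 0 :=
      (Submodule.Quotient.mk_eq_zero _).2 (Submodule.subset_span (by simp))
    change Pcl ((∑ j ∈ Finset.range p, Pe (PSym.P (j : ZMod p))) - Pe PSym.D1 + Pe PSym.D2) = (0 : PV p q) at h0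
    rw [Pcl_add, Pcl_sub, Pcl_sum, sub_add, sub_eq_zero] at h0
    rw [← sum_range_zmod' p (fun c => (Pcl (Pe (PSym.P c)) : PV p q)), h0]
  -- the two double sums
  have hA : ∑ t ∈ Finset.range (p * q), ∑ j ∈ Finset.range m.toNat,
      (Pcl (Pe (PSym.Q ((j : ZMod q) + (t : ZMod q) * (m : ZMod q)))) : PV p q)
      = (m.toNat * p) • (Pcl (Pe PSym.D2) - Pcl (Pe PSym.D1)) := by
    rw [Finset.sum_comm]
    have hone : ∀ j ∈ Finset.range m.toNat,
        ∑ t ∈ Finset.range (p * q),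
          (Pcl (Pe (PSym.Q ((j : ZMod q) + (t : ZMod q) * (m : ZMod q)))) : PV p q)
        = p • (Pcl (Pe PSym.D2) - Pcl (Pe PSym.D1)) := by
      intro j _
      rw [sum_range_mul_zmod' q p
        (fun c => (Pcl (Pe (PSym.Q ((j : ZMod q) + c * (m : ZMod q)))) : PV p q))]
      rw [sum_shift_mul_zmod' q _ _ (p : ZMod q) hbq
        (fun c => (Pcl (Pe (PSym.Q c)) : PV p q)), hQsum]
    rw [Finset.sum_congr rfl hone, Finset.sum_const, Finset.card_range, smul_smul]
  have hB : ∑ t ∈ Finset.range (p * q), ∑ j ∈ Finset.range (-n).toNat,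
      (Pcl (Pe (PSym.P ((j : ZMod p) - (t : ZMod p) * (n : ZMod p)))) : PV p q)
      = ((-n).toNat * q) • (Pcl (Pe PSym.D1) - Pcl (Pe PSym.D2)) := by
    rw [Finset.sum_comm]
    have hone : ∀ j ∈ Finset.range (-n).toNat,
        ∑ t ∈ Finset.range (p * q),
          (Pcl (Pe (PSym.P ((j : ZMod p) - (t : ZMod p) * (n : ZMod p)))) : PV p q)
        = q • (Pcl (Pe PSym.D1) - Pcl (Pe PSym.D2)) := by
      intro j _
      have : ∀ t : ZMod p, (j : ZMod p) - t * (n : ZMod p)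
          = (j : ZMod p) + t * (-(n : ZMod p)) := by intro t; ring
      simp only [this]
      rw [show p * q = q * p from Nat.mul_comm p q]
      rw [sum_range_mul_zmod' p q
        (fun c => (Pcl (Pe (PSym.P ((j : ZMod p) + c * (-(n : ZMod p))))) : PV p q))]
      rw [sum_shift_mul_zmod' p _ _ (-(q : ZMod p)) hbp
        (fun c => (Pcl (Pe (PSym.P c)) : PV p q)), hPsum]
    rw [Finset.sum_congr rfl hone, Finset.sum_const, Finset.card_range, smul_smul]
  rw [hgi (p * q), Finset.sum_add_distrib, hA, hB, key, succ_nsmul]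
  have : ((-n).toNat * q) • ((Pcl (Pe PSym.D1) : PV p q) - Pcl (Pe PSym.D2))
      = -(((-n).toNat * q) • ((Pcl (Pe PSym.D2) : PV p q) - Pcl (Pe PSym.D1))) := by
    rw [← smul_neg, neg_sub]
  rw [this]
  abel
end

section
/- Let S be a set of n functions y₀, y₁, ..., y_{d-1} in a differential field E that are linearly independent over the field of constants C. Then the Wronskian determinant W(y₀, ..., y_{d-1}) is nonzero, and the map y ↦ W(y, y₀, ..., y_{d-1}) / W(y₀, ..., y_{d-1}) defines a monic linear differential operator of order d that annihilates exactly the C-span of y₀, ..., y_{d-1}. -/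
section Aux
variable {E : Type*} [Field E] [CharZero E] (D : E →ₗ[ℚ] E)
    (hL : ∀ a b : E, D (a * b) = a * D b + D a * b)

include hL

theorem auxD_one : D 1 = 0 := by
  have := hL 1 1
  simp at this
  exact this

theorem auxD_inv (b : E) (hb : D b = 0) : D b⁻¹ = 0 := by
  rcases eq_or_ne b 0 with rfl | h
  · simp
  · have h1 : D (b * b⁻¹) = b * D b⁻¹ + D b * b⁻¹ := hL b b⁻¹
    rw [mul_inv_cancel₀ h, auxD_one D hL, hb, zero_mul, add_zero] at h1
    field_simp at h1
    rw [one_div] at h1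
    exact (mul_eq_zero.mp h1.symm).resolve_left h

theorem auxD_iter_mul (c : E) (hc : D c = 0) (k : ℕ) (x : E) :
    (⇑D)^[k] (c * x) = c * (⇑D)^[k] x := by
  induction k with
  | zero => simp
  | succ k ih =>
    rw [Function.iterate_succ_apply', ih, Function.iterate_succ_apply',
      hL, hc, zero_mul, add_zero]

theorem auxKey : ∀ (n : ℕ) (y : Fin n → E),
    Matrix.det (Matrix.of fun i j : Fin n => (⇑D)^[(i : ℕ)] (y j)) = 0 →
    ∃ c : Fin n → E, (∀ i, D (c i) = 0) ∧ ∑ i, c i * y i = 0 ∧ ∃ i, c i ≠ 0 := by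
  intro n
  induction n with
  | zero => intro y h; simp at h
  | succ n ih =>
    intro y hdet
    by_cases h' : Matrix.det (Matrix.of fun i j : Fin n => (⇑D)^[(i : ℕ)] (y j.castSucc)) = 0
    · obtain ⟨c, hc0, hcsum, i0, hi0⟩ := ih _ h'
      refine ⟨Fin.snoc c 0, ?_, ?_, ⟨i0.castSucc, by simpa using hi0⟩⟩
      · intro i
        induction i using Fin.lastCases with
        | last => simp
        | cast j => simpa using hc0 j
      · rw [Fin.sum_univ_castSucc]
        simpa using hcsum
    · obtain ⟨v, hvne, hv⟩ := (Matrix.exists_mulVec_eq_zero_iff).2 hdet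
      have hv' : ∀ i : Fin (n + 1), ∑ j, (⇑D)^[(i : ℕ)] (y j) * v j = 0 := fun i => by
        simpa [Matrix.mulVec, dotProduct] using congrFun hv i
      have hvlast : v (Fin.last n) ≠ 0 := by
        intro h0
        apply hvne
        have hsys : ∀ i : Fin n, ∑ j : Fin n, (⇑D)^[(i : ℕ)] (y j.castSucc) * v j.castSucc = 0 := by
          intro i
          have h1 := hv' i.castSucc
          rw [Fin.sum_univ_castSucc] at h1
          simpa [h0] using h1
        have hz : (fun j : Fin n => v j.castSucc) = 0 :=
          Matrix.eq_zero_of_mulVec_eq_zero h'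
            (by ext i; simpa [Matrix.mulVec, dotProduct] using hsys i)
        ext j
        induction j using Fin.lastCases with
        | last => exact h0
        | cast j => exact congrFun hz j
      set c : Fin n → E := fun j => v j.castSucc * (-(v (Fin.last n))⁻¹) with hcdef
      have hP : ∀ i : Fin (n + 1),
          ∑ j : Fin n, c j * (⇑D)^[(i : ℕ)] (y j.castSucc) = (⇑D)^[(i : ℕ)] (y (Fin.last n)) := by
        intro i
        have h1 := hv' i
        rw [Fin.sum_univ_castSucc] at h1
        have h2 : ∑ j : Fin n, (⇑D)^[(i : ℕ)] (y j.castSucc) * v j.castSucc =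
            -((⇑D)^[(i : ℕ)] (y (Fin.last n)) * v (Fin.last n)) :=
          eq_neg_of_add_eq_zero_left h1
        calc ∑ j : Fin n, c j * (⇑D)^[(i : ℕ)] (y j.castSucc)
            = (∑ j : Fin n, (⇑D)^[(i : ℕ)] (y j.castSucc) * v j.castSucc) * (-(v (Fin.last n))⁻¹) := by
              rw [Finset.sum_mul]; exact Finset.sum_congr rfl fun j _ => by rw [hcdef]; ring
          _ = (⇑D)^[(i : ℕ)] (y (Fin.last n)) := by
              rw [h2]; field_simp
      have hDc : ∀ j, D (c j) = 0 := by
        have hsys : ∀ i : Fin n, ∑ j : Fin n, D (c j) * (⇑D)^[(i : ℕ)] (y j.castSucc) = 0 := by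
          intro i
          have e1 := congrArg (⇑D) (hP i.castSucc)
          rw [map_sum] at e1
          simp only [Fin.coe_castSucc] at e1
          have e2 : ∀ j : Fin n, D (c j * (⇑D)^[(i : ℕ)] (y j.castSucc)) =
              c j * (⇑D)^[(i : ℕ) + 1] (y j.castSucc) + D (c j) * (⇑D)^[(i : ℕ)] (y j.castSucc) := by
            intro j
            rw [hL, Function.iterate_succ_apply']
          rw [Finset.sum_congr rfl fun j _ => e2 j, Finset.sum_add_distrib,
            ← Function.iterate_succ_apply' (⇑D)] at e1
          simp only [Nat.succ_eq_add_one] at e1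
          have e3 := hP i.succ
          simp only [Fin.val_succ] at e3
          linear_combination e1 - e3
        have hz := Matrix.eq_zero_of_mulVec_eq_zero h'
          (v := fun j => D (c j))
          (by ext i; simpa [Matrix.mulVec, dotProduct, mul_comm] using hsys i)
        exact fun j => congrFun hz j
      refine ⟨Fin.snoc c (-1), ?_, ?_, ⟨Fin.last n, by simp⟩⟩
      · intro i
        induction i using Fin.lastCases with
        | last => simp [auxD_one D hL]
        | cast j => simpa using hDc j
      · rw [Fin.sum_univ_castSucc]
        simp only [Fin.snoc_castSucc, Fin.snoc_last]
        have h0 := hP 0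
        simp only [Fin.val_zero, Function.iterate_zero, id_eq] at h0
        linear_combination h0

end Aux

/-- In a differential field `E` with derivation `D`, if `y₀, …, y_{n-1}` are
linearly independent over the constants, then their Wronskian is nonzero and
`z ↦ W(y₀,…,y_{n-1},z) / W(y₀,…,y_{n-1})` is a monic linear differential operator of order
`n` whose kernel is exactly the span of the `y i` over the constants. -/
theorem stmt_16 {E : Type*} [Field E] [CharZero E] (D : E →ₗ[ℚ] E)
    (hLeibniz : ∀ a b : E, D (a * b) = a * D b + D a * b)
    (n : ℕ) (y : Fin n → E)
    (hind : ∀ c : Fin n → E, (∀ i, D (c i) = 0) → ∑ i, c i * y i = 0 → ∀ i, c i = 0) :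
    Matrix.det (Matrix.of fun i j : Fin n => (⇑D)^[(i : ℕ)] (y j)) ≠ 0 ∧
    ∃ a : Fin n → E,
      (∀ z : E,
        Matrix.det (Matrix.of fun i j : Fin (n + 1) => (⇑D)^[(i : ℕ)] ((Fin.snoc y z : Fin (n + 1) → E) j)) /
            Matrix.det (Matrix.of fun i j : Fin n => (⇑D)^[(i : ℕ)] (y j)) =
          (⇑D)^[n] z + ∑ i : Fin n, a i * (⇑D)^[(i : ℕ)] z) ∧
      (∀ z : E,
        (Matrix.det (Matrix.of fun i j : Fin (n + 1) => (⇑D)^[(i : ℕ)] ((Fin.snoc y z : Fin (n + 1) → E) j)) /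
            Matrix.det (Matrix.of fun i j : Fin n => (⇑D)^[(i : ℕ)] (y j)) = 0 ↔
          ∃ c : Fin n → E, (∀ i, D (c i) = 0) ∧ z = ∑ i, c i * y i)) := by
  have hW : Matrix.det (Matrix.of fun i j : Fin n => (⇑D)^[(i : ℕ)] (y j)) ≠ 0 := by
    intro h
    obtain ⟨c, hc, hsum, i, hi⟩ := auxKey D hLeibniz n y h
    exact hi (hind c hc hsum i)
  refine ⟨hW, ?_⟩
  set W := Matrix.det (Matrix.of fun i j : Fin n => (⇑D)^[(i : ℕ)] (y j)) with hWdef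
  set m : Fin (n + 1) → E :=
    fun i => Matrix.det (Matrix.of fun p q : Fin n => (⇑D)^[(i.succAbove p : ℕ)] (y q)) with hmdef
  have hmlast : m (Fin.last n) = W := by
    have heq : (Matrix.of fun p q : Fin n => (⇑D)^[((Fin.last n).succAbove p : ℕ)] (y q)) =
        (Matrix.of fun i j : Fin n => (⇑D)^[(i : ℕ)] (y j)) := by
      ext p q
      simp [Fin.succAbove_last]
    simp only [hmdef, hWdef, heq]
  have hexp : ∀ z : E,
      Matrix.det (Matrix.of fun i j : Fin (n + 1) => (⇑D)^[(i : ℕ)] ((Fin.snoc y z : Fin (n + 1) → E) j)) =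
      ∑ i : Fin (n + 1), (-1) ^ ((i : ℕ) + n) * (⇑D)^[(i : ℕ)] z * m i := by
    intro z
    rw [Matrix.det_succ_column _ (Fin.last n)]
    refine Finset.sum_congr rfl fun i _ => ?_
    have hsub : (Matrix.of fun i' j : Fin (n + 1) => (⇑D)^[(i' : ℕ)] ((Fin.snoc y z : Fin (n + 1) → E) j)).submatrix
        i.succAbove (Fin.last n).succAbove =
        Matrix.of fun p q : Fin n => (⇑D)^[(i.succAbove p : ℕ)] (y q) := by
      ext p q
      simp [Fin.succAbove_last]
    rw [hsub, Fin.val_last, Matrix.of_apply, Fin.snoc_last]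
  set a : Fin n → E := fun i => (-1) ^ ((i : ℕ) + n) * m i.castSucc / W with hadef
  have hWa : ∀ i : Fin n, W * a i = (-1) ^ ((i : ℕ) + n) * m i.castSucc := fun i => by
    rw [hadef]; field_simp
  have hkey : ∀ z : E,
      Matrix.det (Matrix.of fun i j : Fin (n + 1) => (⇑D)^[(i : ℕ)] ((Fin.snoc y z : Fin (n + 1) → E) j)) =
      W * ((⇑D)^[n] z + ∑ i : Fin n, a i * (⇑D)^[(i : ℕ)] z) := by
    intro z
    rw [hexp z, Fin.sum_univ_castSucc, hmlast, Fin.val_last]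
    simp only [Fin.coe_castSucc]
    rw [mul_add, Finset.mul_sum]
    have h1 : ∀ i : Fin n, W * (a i * (⇑D)^[(i : ℕ)] z) =
        (-1) ^ ((i : ℕ) + n) * (⇑D)^[(i : ℕ)] z * m i.castSucc := fun i => by
      rw [← mul_assoc, hWa i]; ring
    rw [Finset.sum_congr rfl fun i _ => h1 i]
    have hnn : ((-1 : E)) ^ (n + n) = 1 := by
      rw [← two_mul, pow_mul]; norm_num
    rw [hnn]; ring
  refine ⟨a, fun z => by rw [hkey z, mul_div_cancel_left₀ _ hW], fun z => ?_⟩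
  rw [div_eq_zero_iff, or_iff_left hW]
  constructor
  · intro hz
    obtain ⟨c, hc, hsum, hne⟩ := auxKey D hLeibniz (n + 1) (Fin.snoc y z) hz
    rw [Fin.sum_univ_castSucc] at hsum
    simp only [Fin.snoc_castSucc, Fin.snoc_last] at hsum
    have hclast : c (Fin.last n) ≠ 0 := by
      intro h0
      obtain ⟨i, hi⟩ := hne
      apply hi
      have hz0 : ∑ j : Fin n, c j.castSucc * y j = 0 := by
        rw [h0, zero_mul, add_zero] at hsum
        exact hsum
      have := hind (fun j => c j.castSucc) (fun j => hc _) hz0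
      induction i using Fin.lastCases with
      | last => exact h0
      | cast j => exact this j
    refine ⟨fun i => c i.castSucc * (-(c (Fin.last n))⁻¹), ?_, ?_⟩
    · intro i
      rw [hLeibniz, map_neg, auxD_inv D hLeibniz _ (hc _), hc]
      simp
    · have h2 : ∑ j : Fin n, c j.castSucc * y j = -(c (Fin.last n) * z) :=
        eq_neg_of_add_eq_zero_left hsum
      calc z = (∑ j : Fin n, c j.castSucc * y j) * (-(c (Fin.last n))⁻¹) := by
              rw [h2]; field_simp
        _ = ∑ i : Fin n, c i.castSucc * (-(c (Fin.last n))⁻¹) * y i := by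
              rw [Finset.sum_mul]; exact Finset.sum_congr rfl fun j _ => by ring
  · rintro ⟨c, hc, rfl⟩
    apply Matrix.exists_mulVec_eq_zero_iff.1
    refine ⟨Fin.snoc c (-1), fun h => by simpa using congrFun h (Fin.last n), ?_⟩
    have hiter : ∀ k : ℕ, (⇑D)^[k] (∑ j, c j * y j) = ∑ j, (⇑D)^[k] (y j) * c j := by
      intro k
      calc (⇑D)^[k] (∑ j, c j * y j) = (D ^ k) (∑ j, c j * y j) := (Module.End.pow_apply D k _).symm
        _ = ∑ j, (D ^ k) (c j * y j) := map_sum _ _ _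
        _ = ∑ j, (⇑D)^[k] (y j) * c j := Finset.sum_congr rfl fun j _ => by
              rw [Module.End.pow_apply, auxD_iter_mul D hLeibniz _ (hc j), mul_comm]
    ext i
    have : ∑ j : Fin (n + 1), (⇑D)^[(i : ℕ)] ((Fin.snoc y (∑ j, c j * y j) : Fin (n + 1) → E) j) *
        (Fin.snoc c (-1) : Fin (n + 1) → E) j = 0 := by
      rw [Fin.sum_univ_castSucc]
      simp only [Fin.snoc_castSucc, Fin.snoc_last]
      rw [hiter i]
      ring
    simpa [Matrix.mulVec, dotProduct] using this
end
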